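/- For α ∈ (0,1) and β = 1−α, the functions A_α − A_β and β A_β − α A_α are positive on (0,π) whenever α < 1/2, where A_γ(u) = γ cot(γu) − cot(u). -/

import Mathlib

open Real

noncomputable def Afun (γ u : ℝ) : ℝ := γ * Real.cot (γ * u) - Real.cot u

/-- `sin x / x` is strictly decreasing on `(0, π]`, in multiplied-out form. -/
lemma sin_mul_key (x y : ℝ) (hx : 0 < x) (hxy : x < y) (hy : y ≤ Real.pi) :
    x * Real.sin y < y * Real.sin x := by
  have h0y : (0:ℝ) < y := hx.trans hxy
  have hmem0 : (0:ℝ) ∈ Set.Icc (0:ℝ) Real.pi := ⟨le_refl 0, Real.pi_pos.le⟩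
  have hmemy : y ∈ Set.Icc (0:ℝ) Real.pi := ⟨h0y.le, hy⟩
  have ha : 0 < 1 - x / y := by
    rw [sub_pos]; exact (div_lt_one h0y).2 hxy
  have hb : 0 < x / y := div_pos hx h0y
  have h := strictConcaveOn_sin_Icc.2 hmem0 hmemy h0y.ne ha hb (by ring)
  rw [smul_eq_mul, smul_eq_mul, smul_eq_mul, smul_eq_mul, Real.sin_zero] at h
  have hxeq : (1 - x / y) * (0:ℝ) + x / y * y = x := by field_simp; ring
  rw [hxeq] at h
  have h' : x / y * Real.sin y < Real.sin x := by linarith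
  have h2 : x / y * Real.sin y * y < Real.sin x * y :=
    mul_lt_mul_of_pos_right h' h0y
  have h3 : x / y * Real.sin y * y = x * Real.sin y := by
    field_simp
  rw [h3] at h2
  linarith

theorem Afun_differences_pos (α : ℝ) (hα : α ∈ Set.Ioo (0:ℝ) (1/2)) :
    ∀ u ∈ Set.Ioo 0 Real.pi,
      0 < Afun α u - Afun (1 - α) u ∧
      0 < (1 - α) * Afun (1 - α) u - α * Afun α u := by
  obtain ⟨hα0, hα2⟩ := hα
  intro u hu
  obtain ⟨hu0, huπ⟩ := hu
  set β : ℝ := 1 - α with hβ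
  have hαβ : α < β := by rw [hβ]; linarith
  have hβ1 : β < 1 := by rw [hβ]; linarith
  have hβ0 : 0 < β := by rw [hβ]; linarith
  have ha0 : 0 < α * u := mul_pos hα0 hu0
  have hab : α * u < β * u := by nlinarith
  have hbu : β * u < u := by nlinarith
  have hbπ : β * u < Real.pi := hbu.trans huπ
  have hsa : 0 < Real.sin (α * u) :=
    Real.sin_pos_of_pos_of_lt_pi ha0 (hab.trans hbπ)
  have hsb : 0 < Real.sin (β * u) :=
    Real.sin_pos_of_pos_of_lt_pi (mul_pos hβ0 hu0) hbπ
  have hs : 0 < Real.sin u := Real.sin_pos_of_pos_of_lt_pi hu0 huπ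
  have hd0 : 0 < (β - α) * u := mul_pos (by linarith) hu0
  have hdu : (β - α) * u < u := by nlinarith
  -- key inequality 1 : sin(δ u) > δ sin u  with δ = β - α
  have k1 : (β - α) * Real.sin u < Real.sin ((β - α) * u) := by
    have h := sin_mul_key ((β - α) * u) u hd0 hdu huπ.le
    nlinarith
  -- key inequality 2 : β sin(α u) > α sin(β u)
  have k2 : α * Real.sin (β * u) < β * Real.sin (α * u) := by
    have h := sin_mul_key (α * u) (β * u) ha0 hab hbπ.le
    nlinarith
  have hb' : β * u = u - α * u := by rw [hβ]; ring
  have hd' : (β - α) * u = u - 2 * (α * u) := by rw [hβ]; ring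
  -- numerator identity for part 1
  have E1 : 2 * (α * Real.cos (α * u) * Real.sin (β * u)
        - β * Real.cos (β * u) * Real.sin (α * u))
      = Real.sin ((β - α) * u) - (β - α) * Real.sin u := by
    rw [hd', hb', Real.sin_sub u (2 * (α * u)), Real.sin_sub u (α * u),
      Real.cos_sub u (α * u), Real.sin_two_mul, Real.cos_two_mul, hβ]
    linear_combination (2 * α - 2) * Real.sin u * Real.sin_sq_add_cos_sq (α * u)
  -- numerator identity for part 2
  have E2 : β ^ 2 * Real.cos (β * u) * Real.sin (α * u) * Real.sin u
        - α ^ 2 * Real.cos (α * u) * Real.sin (β * u) * Real.sin u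
        - (β - α) * Real.cos u * Real.sin (α * u) * Real.sin (β * u)
      = β ^ 2 * Real.sin (α * u) ^ 2 - α ^ 2 * Real.sin (β * u) ^ 2 := by
    rw [hb', Real.sin_sub u (α * u), Real.cos_sub u (α * u), hβ]
    linear_combination ((1 - α) ^ 2 * Real.sin (α * u) ^ 2) * Real.sin_sq_add_cos_sq u
  constructor
  · have H1 : Afun α u - Afun β u
        = (2 * (α * Real.cos (α * u) * Real.sin (β * u)
            - β * Real.cos (β * u) * Real.sin (α * u)))
          / (2 * (Real.sin (α * u) * Real.sin (β * u))) := by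
      simp only [Afun, Real.cot_eq_cos_div_sin]
      field_simp [hsa.ne', hsb.ne', hs.ne', (by rw [mul_comm]; exact hsa.ne' : Real.sin (u * α) ≠ 0), (by rw [mul_comm]; exact hsb.ne' : Real.sin (u * β) ≠ 0)]
      ring
    rw [H1, E1]
    exact div_pos (by linarith) (by positivity)
  · have H2 : β * Afun β u - α * Afun α u
        = (β ^ 2 * Real.cos (β * u) * Real.sin (α * u) * Real.sin u
            - α ^ 2 * Real.cos (α * u) * Real.sin (β * u) * Real.sin u
            - (β - α) * Real.cos u * Real.sin (α * u) * Real.sin (β * u))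
          / (Real.sin (α * u) * Real.sin (β * u) * Real.sin u) := by
      simp only [Afun, Real.cot_eq_cos_div_sin]
      field_simp [hsa.ne', hsb.ne', hs.ne', (by rw [mul_comm]; exact hsa.ne' : Real.sin (u * α) ≠ 0), (by rw [mul_comm]; exact hsb.ne' : Real.sin (u * β) ≠ 0)]
      ring
    rw [H2, E2]
    apply div_pos
    · have h1 : 0 < α * Real.sin (β * u) := mul_pos hα0 hsb
      nlinarith
    · positivity
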